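/- There exists a constant C > 0 such that the following holds. Let a, b, α, β be natural numbers with a·α + b·β > a·b, and let N = max{α, β, a, b}. Then there is a decoder D : List Bool → List Bool → Bool (depending only on a, b, α, β) such that for every bipartite graph given by a relation e : Fin a → Fin b → Prop there exist label assignments ℓ_A : Fin a → List Bool and ℓ_B : Fin b → List Bool with (ℓ_A u).length ≤ α + C·log(N+2) for all u : Fin a, (ℓ_B v).length ≤ β + C·log(N+2) for all v : Fin b, and D (ℓ_A u) (ℓ_B v) = true if and only if e u v. -/

import Mathlib

def lS (a b α u v : ℕ) : Bool := decide ((u * b + v * a) % (a * b) < α * a)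

def encL : ℕ → ℕ → List Bool
  | 0, _ => []
  | L+1, n => (n % 2 == 1) :: encL L (n / 2)

def decL : List Bool → ℕ
  | [] => 0
  | b :: l => (cond b 1 0) + 2 * decL l

def theD (a b α L : ℕ) (x y : List Bool) : Bool :=
  let u := decL (x.take L)
  let v := decL (y.take L)
  if lS a b α u v then
    (x.drop L).getD (((List.range b).filter (lS a b α u)).idxOf v) false
  else
    (y.drop L).getD (((List.range a).filter (fun w => !lS a b α w v)).idxOf u) false

lemma encL_length (L n : ℕ) : (encL L n).length = L := by
  induction L generalizing n with
  | zero => rfl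
  | succ L ih => simp [encL, ih]

lemma decL_encL (L n : ℕ) (h : n < 2 ^ L) : decL (encL L n) = n := by
  induction L generalizing n with
  | zero => simp at h; simp [h, encL, decL]
  | succ L ih =>
    have h2 : n / 2 < 2 ^ L := by
      have : (2:ℕ) ^ (L+1) = 2 * 2 ^ L := by ring
      omega
    have := ih (n / 2) h2
    simp only [encL, decL, this]
    rcases Nat.mod_two_eq_zero_or_one n with h3 | h3 <;> simp [h3] <;> omega

lemma modkey (a b x v : ℕ) (ha : 0 < a) :
    (x + v * a) % (a * b) = x % a + a * ((x / a + v) % b) := by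
  have hx : a * (x / a) + x % a = x := Nat.div_add_mod x a
  set m := x / a + v with hm
  have hc : v * a = a * v := Nat.mul_comm v a
  have hsplit : a * m = a * (x/a) + a * v := by rw [hm, Nat.mul_add]
  have h1 : x + v * a = x % a + a * (b * (m / b) + m % b) := by
    rw [Nat.div_add_mod m b]
    omega
  rcases Nat.eq_zero_or_pos b with hb | hb
  · subst hb
    simp only [Nat.mul_zero, Nat.mod_zero]
    omega
  · rw [h1]
    have h2 : x % a + a * (b * (m / b) + m % b) = (x % a + a * (m % b)) + (a*b) * (m / b) := by ring
    rw [h2, Nat.add_mul_mod_self_left]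
    apply Nat.mod_eq_of_lt
    have h3 : x % a < a := Nat.mod_lt _ ha
    have h4 : m % b + 1 ≤ b := Nat.mod_lt _ hb
    calc x % a + a * (m % b) < a + a * (m % b) := by omega
    _ = a * (m % b + 1) := by ring
    _ ≤ a * b := Nat.mul_le_mul_left a h4

lemma lS_iff (a b α u v : ℕ) (ha : 0 < a) :
    lS a b α u v = true ↔ (u * b / a + v) % b < α := by
  rw [lS, decide_eq_true_iff, modkey a b (u*b) v ha]
  have h3 : u * b % a < a := Nat.mod_lt _ ha
  set m := (u * b / a + v) % b with hm
  constructor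
  · intro h
    by_contra hc
    push_neg at hc
    have : α * a ≤ a * m := by
      calc α * a = a * α := Nat.mul_comm _ _
      _ ≤ a * m := Nat.mul_le_mul_left a hc
    omega
  · intro h
    have : a * (m + 1) ≤ a * α := Nat.mul_le_mul_left a h
    have h2 : a * (m+1) = a * m + a := by ring
    have h4 : a * α = α * a := Nat.mul_comm _ _
    omega

lemma listcard (p : ℕ → Bool) (n : ℕ) :
    ((List.range n).filter p).length = ((Finset.range n).filter (fun v => p v = true)).card := by
  rw [Finset.card_def, Finset.filter_val, Finset.range_val, Multiset.range, Multiset.filter_coe, Multiset.coe_card]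
  simp

lemma lemA (a b α u : ℕ) (ha : 0 < a) :
    ((List.range b).filter (lS a b α u)).length ≤ α := by
  rw [listcard]
  have := Finset.card_le_card_of_injOn (s := (Finset.range b).filter (fun v => lS a b α u v = true))
    (t := Finset.range α) (fun v => (u * b / a + v) % b) ?_ ?_
  · simpa using this
  · intro v hv
    simp only [Finset.mem_coe, Finset.mem_filter, Finset.mem_range] at hv ⊢
    exact (lS_iff a b α u v ha).mp hv.2
  · intro v1 h1 v2 h2 heq
    simp only [Finset.coe_filter, Set.mem_setOf_eq, Finset.mem_range] at h1 h2
    have : v1 % b = v2 % b := Nat.ModEq.add_left_cancel' (u * b / a) (heq : _ ≡ _ [MOD b])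
    rwa [Nat.mod_eq_of_lt h1.1, Nat.mod_eq_of_lt h2.1] at this

lemma lemB (a b α β v : ℕ) (hb : 0 < b) (h : a * b < a * α + b * β) :
    ((List.range a).filter (fun w => !lS a b α w v)).length ≤ β := by
  rw [listcard]
  have := Finset.card_le_card_of_injOn (s := (Finset.range a).filter (fun w => (!lS a b α w v) = true))
    (t := Finset.Ico (a - β) a) (fun w => (v * a / b + w) % a) ?_ ?_
  · have hcard : (Finset.Ico (a - β) a).card = a - (a - β) := Nat.card_Ico _ _
    omega
  · intro w hw
    simp only [Finset.mem_coe, Finset.mem_filter, Finset.mem_range, Bool.not_eq_true'] at hw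
    obtain ⟨hwa, hS⟩ := hw
    have ha : 0 < a := by omega
    rw [lS, decide_eq_false_iff_not] at hS
    push_neg at hS
    have hcomm : w * b + v * a = v * a + w * b := by ring
    have hcomm2 : a * b = b * a := by ring
    rw [hcomm, hcomm2, modkey b a (v*a) w hb] at hS
    set m := (v * a / b + w) % a with hm
    have hma : m < a := Nat.mod_lt _ ha
    have hr : v * a % b < b := Nat.mod_lt _ hb
    simp only [Finset.mem_coe, Finset.mem_Ico]
    refine ⟨?_, hma⟩
    by_contra hc
    push_neg at hc
    have hstep : b * (m + β + 1) ≤ b * a := Nat.mul_le_mul_left b (by omega)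
    have hexp : b * (m + β + 1) = b * m + b * β + b := by ring
    have e1 : b * a = a * b := by ring
    have e2 : α * a = a * α := by ring
    omega
  · intro w1 h1 w2 h2 heq
    simp only [Finset.coe_filter, Set.mem_setOf_eq, Finset.mem_range] at h1 h2
    have : w1 % a = w2 % a := Nat.ModEq.add_left_cancel' (v * a / b) (heq : _ ≡ _ [MOD a])
    rwa [Nat.mod_eq_of_lt h1.1, Nat.mod_eq_of_lt h2.1] at this

theorem bipartite_unbalanced_adjacency_labeling :
    ∃ C : ℝ, C > 0 ∧
      ∀ a b α β : ℕ, a * α + b * β > a * b →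
        ∃ D : List Bool → List Bool → Bool,
          ∀ e : Fin a → Fin b → Prop,
            ∃ (ℓA : Fin a → List Bool) (ℓB : Fin b → List Bool),
              (∀ u : Fin a, ((ℓA u).length : ℝ) ≤
                (α : ℝ) + C * Real.log ((max (max α β) (max a b) : ℕ) + 2)) ∧
              (∀ v : Fin b, ((ℓB v).length : ℝ) ≤
                (β : ℝ) + C * Real.log ((max (max α β) (max a b) : ℕ) + 2)) ∧
              (∀ (u : Fin a) (v : Fin b), D (ℓA u) (ℓB v) = true ↔ e u v) := by
  refine ⟨4, by norm_num, ?_⟩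
  intro a b α β h
  set N : ℕ := max (max α β) (max a b) with hN
  set L : ℕ := Nat.log 2 (N + 2) + 1 with hL
  -- bound on L
  have hLbound : (L : ℝ) ≤ 4 * Real.log ((N : ℝ) + 2) := by
    set k : ℕ := Nat.log 2 (N + 2) with hk
    have hk1 : 1 ≤ k := Nat.log_pos (by norm_num) (by omega)
    have hpow : (2:ℕ) ^ k ≤ N + 2 := Nat.pow_log_le_self 2 (by omega)
    have hlog : (k : ℝ) * Real.log 2 ≤ Real.log ((N : ℝ) + 2) := by
      have h1 : ((2:ℝ)) ^ k ≤ (N : ℝ) + 2 := by exact_mod_cast hpow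
      have h2 : Real.log ((2:ℝ) ^ k) ≤ Real.log ((N : ℝ) + 2) :=
        Real.log_le_log (by positivity) h1
      rwa [Real.log_pow] at h2
    have hl2 : (0.6931471803 : ℝ) < Real.log 2 := Real.log_two_gt_d9
    have hLk : (L : ℝ) = (k : ℝ) + 1 := by rw [hL]; push_cast; ring
    rw [hLk]
    have hk1' : (1:ℝ) ≤ (k:ℝ) := by exact_mod_cast hk1
    nlinarith [hlog, hl2, hk1']
  have hpowL : N + 2 < 2 ^ L := Nat.lt_pow_succ_log_self (by norm_num) (N + 2)
  have haN : a ≤ N := le_trans (le_max_left a b) (le_max_right _ _)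
  have hbN : b ≤ N := le_trans (le_max_right a b) (le_max_right _ _)
  refine ⟨theD a b α L, ?_⟩
  intro e
  classical
  set eB : ℕ → ℕ → Bool := fun u v =>
    if h : u < a ∧ v < b then decide (e ⟨u, h.1⟩ ⟨v, h.2⟩) else false with heB
  refine ⟨fun u => encL L u.val ++ ((List.range b).filter (lS a b α u.val)).map (eB u.val),
          fun v => encL L v.val ++ ((List.range a).filter (fun w => !lS a b α w v.val)).map (fun w => eB w v.val),
          ?_, ?_, ?_⟩
  · intro u
    have hcnt := lemA a b α u.val u.pos
    have hlen : ((encL L u.val ++ ((List.range b).filter (lS a b α u.val)).map (eB u.val)).length : ℝ)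
        = (L : ℝ) + (((List.range b).filter (lS a b α u.val)).length : ℝ) := by
      simp [encL_length]
    rw [hlen]
    have : (((List.range b).filter (lS a b α u.val)).length : ℝ) ≤ (α : ℝ) := by exact_mod_cast hcnt
    linarith
  · intro v
    have hcnt := lemB a b α β v.val v.pos (by omega)
    have hlen : ((encL L v.val ++ ((List.range a).filter (fun w => !lS a b α w v.val)).map (fun w => eB w v.val)).length : ℝ)
        = (L : ℝ) + (((List.range a).filter (fun w => !lS a b α w v.val)).length : ℝ) := by
      simp [encL_length]
    rw [hlen]
    have : (((List.range a).filter (fun w => !lS a b α w v.val)).length : ℝ) ≤ (β : ℝ) := by exact_mod_cast hcnt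
    linarith
  · intro u v
    set mA : List Bool := ((List.range b).filter (lS a b α u.val)).map (eB u.val) with hmA
    set mB : List Bool := ((List.range a).filter (fun w => !lS a b α w v.val)).map (fun w => eB w v.val) with hmB
    have htakeA : (encL L u.val ++ mA).take L = encL L u.val := by
      have : (encL L u.val ++ mA).take (encL L u.val).length = encL L u.val := List.take_left
      rwa [encL_length] at this
    have hdropA : (encL L u.val ++ mA).drop L = mA := by
      have : (encL L u.val ++ mA).drop (encL L u.val).length = mA := List.drop_left
      rwa [encL_length] at this
    have htakeB : (encL L v.val ++ mB).take L = encL L v.val := by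
      have : (encL L v.val ++ mB).take (encL L v.val).length = encL L v.val := List.take_left
      rwa [encL_length] at this
    have hdropB : (encL L v.val ++ mB).drop L = mB := by
      have : (encL L v.val ++ mB).drop (encL L v.val).length = mB := List.drop_left
      rwa [encL_length] at this
    have hdecA : decL (encL L u.val) = u.val := decL_encL L u.val (by have := u.isLt; omega)
    have hdecB : decL (encL L v.val) = v.val := decL_encL L v.val (by have := v.isLt; omega)
    have heBval : eB u.val v.val = true ↔ e u v := by
      rw [heB]
      simp only [u.isLt, v.isLt, and_self, dif_pos, decide_eq_true_eq, Fin.eta]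
    rw [theD]
    simp only [← hmA, ← hmB, htakeA, htakeB, hdecA, hdecB, hdropA, hdropB]
    by_cases hS : lS a b α u.val v.val = true
    · rw [if_pos hS]
      have hmem : v.val ∈ (List.range b).filter (lS a b α u.val) :=
        List.mem_filter.mpr ⟨List.mem_range.mpr v.isLt, hS⟩
      have hidx : ((List.range b).filter (lS a b α u.val)).idxOf v.val
          < ((List.range b).filter (lS a b α u.val)).length := List.idxOf_lt_length_iff.mpr hmem
      have hidx' : ((List.range b).filter (lS a b α u.val)).idxOf v.val < mA.length := by
        rw [hmA, List.length_map]; exact hidx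
      rw [List.getD_eq_getElem mA false hidx']
      simp only [hmA, List.getElem_map, List.getElem_idxOf]
      exact heBval
    · rw [if_neg hS]
      have hS' : (!lS a b α u.val v.val) = true := by
        simp [Bool.not_eq_true] at hS ⊢; exact hS
      have hmem : u.val ∈ (List.range a).filter (fun w => !lS a b α w v.val) :=
        List.mem_filter.mpr ⟨List.mem_range.mpr u.isLt, hS'⟩
      have hidx : ((List.range a).filter (fun w => !lS a b α w v.val)).idxOf u.val
          < ((List.range a).filter (fun w => !lS a b α w v.val)).length := List.idxOf_lt_length_iff.mpr hmem
      have hidx' : ((List.range a).filter (fun w => !lS a b α w v.val)).idxOf u.val < mB.length := by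
        rw [hmB, List.length_map]; exact hidx
      rw [List.getD_eq_getElem mB false hidx']
      simp only [hmB, List.getElem_map, List.getElem_idxOf]
      exact heBval
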